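/- For all complex numbers z, z', the operators E, F, H on the space V of finitely supported complex functions on the set of all Young diagrams, defined on the basis {δ_λ} by E δ_λ = ∑_{ν : ν ↘ λ} (z)_{ν/λ}(z')_{ν/λ} δ_ν, F δ_λ = −∑_{μ : μ ↗ λ} δ_μ, H δ_λ = (zz' + 2|λ|) δ_λ, satisfy the sl(2,ℂ) commutation relations: H∘E − E∘H = 2E, H∘F − F∘H = −2F, and E∘F − F∘E = H. -/

import Mathlib

/-- `μ ↗ ν` : the Young diagram `ν` is obtained from `μ` by adding one box. -/
def YoungDiagram.Covers (μ ν : YoungDiagram) : Prop :=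
  μ ≤ ν ∧ ν.card = μ.card + 1

/-- `(w)_{λ/μ} = ∏_{(i,j) ∈ λ∖μ} (w + j - i)`. -/
noncomputable def YoungDiagram.poch (w : ℂ) (μ l : YoungDiagram) : ℂ :=
  ∏ b ∈ l.cells \ μ.cells, (w + (b.2 : ℂ) - (b.1 : ℂ))

namespace YoungDiagram

/-- A cell `c` can be added to `μ`. -/
def AddP (μ : YoungDiagram) (c : ℕ × ℕ) : Prop :=
  c ∉ μ ∧ (c.1 = 0 ∨ (c.1 - 1, c.2) ∈ μ) ∧ (c.2 = 0 ∨ (c.1, c.2 - 1) ∈ μ)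

/-- A cell `c` can be removed from `ν`. -/
def RemP (ν : YoungDiagram) (c : ℕ × ℕ) : Prop :=
  c ∈ ν ∧ (c.1 + 1, c.2) ∉ ν ∧ (c.1, c.2 + 1) ∉ ν

instance (μ : YoungDiagram) : DecidablePred (AddP μ) := fun c => by
  unfold AddP; infer_instance

instance (ν : YoungDiagram) : DecidablePred (RemP ν) := fun c => by
  unfold RemP; infer_instance

/-- The rectangle with corner `c`. -/
def rect (c : ℕ × ℕ) : YoungDiagram where
  cells := Finset.range (c.1 + 1) ×ˢ Finset.range (c.2 + 1)
  isLowerSet := by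
    rintro ⟨a, b⟩ ⟨x, y⟩ ⟨h1, h2⟩ h
    simp only [Finset.coe_product, Finset.coe_range, Set.mem_prod, Set.mem_Iio] at h ⊢
    omega

lemma mem_rect {c x : ℕ × ℕ} : x ∈ rect c ↔ x.1 ≤ c.1 ∧ x.2 ≤ c.2 := by
  rcases x with ⟨a, b⟩
  show (a, b) ∈ Finset.range (c.1 + 1) ×ˢ Finset.range (c.2 + 1) ↔ _
  simp only [rect, mem_mk, Finset.mem_product, Finset.mem_range]
  omega

/-- Add cell `c` to `μ`. -/
def grow (μ : YoungDiagram) (c : ℕ × ℕ) : YoungDiagram := μ ⊔ rect c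

/-- Remove the up-set of cell `c` from `ν`. -/
def shrink (ν : YoungDiagram) (c : ℕ × ℕ) : YoungDiagram where
  cells := ν.cells.filter fun x => ¬(c.1 ≤ x.1 ∧ c.2 ≤ x.2)
  isLowerSet := by
    intro x y hxy hy
    simp only [Finset.coe_filter, Set.mem_setOf_eq, mem_cells] at hy ⊢
    exact ⟨ν.isLowerSet hxy hy.1, fun hc => hy.2 ⟨hc.1.trans hxy.1, hc.2.trans hxy.2⟩⟩

lemma mem_shrink {ν : YoungDiagram} {c x : ℕ × ℕ} :
    x ∈ shrink ν c ↔ x ∈ ν ∧ ¬(c.1 ≤ x.1 ∧ c.2 ≤ x.2) := by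
  simp [shrink, mem_mk, Finset.mem_filter, mem_cells]

lemma grow_cells {μ : YoungDiagram} {c : ℕ × ℕ} (h : AddP μ c) :
    (grow μ c).cells = insert c μ.cells := by
  obtain ⟨hc, h1, h2⟩ := h
  ext x
  rw [mem_cells, Finset.mem_insert, ← mem_cells]
  show x ∈ μ ⊔ rect c ↔ _
  rw [mem_sup, mem_rect]
  constructor
  · rintro (hx | ⟨ha, hb⟩)
    · exact Or.inr hx
    · rcases eq_or_lt_of_le ha with ha' | ha'
      · rcases eq_or_lt_of_le hb with hb' | hb'
        · left; exact Prod.ext ha' hb'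
        · rcases h2 with h2 | h2
          · omega
          · right; exact μ.up_left_mem (le_of_eq ha') (by omega) h2
      · rcases h1 with h1 | h1
        · omega
        · right; exact μ.up_left_mem (by omega) hb h1
  · rintro (rfl | hx)
    · exact Or.inr ⟨le_refl _, le_refl _⟩
    · exact Or.inl hx

lemma shrink_cells {ν : YoungDiagram} {c : ℕ × ℕ} (h : RemP ν c) :
    (shrink ν c).cells = ν.cells.erase c := by
  obtain ⟨hc, h1, h2⟩ := h
  ext x
  rw [Finset.mem_erase, mem_cells, mem_cells, mem_shrink]
  constructor
  · rintro ⟨hx, hcx⟩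
    refine ⟨fun h => hcx (by simp [h]), hx⟩
  · rintro ⟨hne, hx⟩
    refine ⟨hx, fun hab => ?_⟩
    obtain ⟨ha, hb⟩ := hab
    rcases eq_or_lt_of_le ha with ha' | ha'
    · rcases eq_or_lt_of_le hb with hb' | hb'
      · exact hne (Prod.ext ha'.symm hb'.symm)
      · exact h2 (ν.up_left_mem ha'.le (by omega) hx)
    · exact h1 (ν.up_left_mem ha' hb hx)

lemma grow_card {μ : YoungDiagram} {c : ℕ × ℕ} (h : AddP μ c) :
    (grow μ c).card = μ.card + 1 := by
  rw [YoungDiagram.card, grow_cells h, Finset.card_insert_of_notMem (by simpa using h.1)]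

lemma ext_cells {μ ν : YoungDiagram} (h : μ.cells = ν.cells) : μ = ν := by
  cases μ; cases ν; simpa using h

lemma covers_iff_grow {μ ν : YoungDiagram} :
    Covers μ ν ↔ ∃ c, AddP μ c ∧ ν = grow μ c := by
  constructor
  · rintro ⟨hle, hcard⟩
    have hsub : μ.cells ⊆ ν.cells := cells_subset_iff.mpr hle
    have hcard' : ν.cells.card = μ.cells.card + 1 := hcard
    have hd : (ν.cells \ μ.cells).card = 1 := by
      rw [Finset.card_sdiff_of_subset hsub]; omega
    obtain ⟨c, hc⟩ := Finset.card_eq_one.mp hd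
    have hcν : c ∈ ν.cells ∧ c ∉ μ.cells := by
      have := hc ▸ Finset.mem_singleton_self c
      simpa [Finset.mem_sdiff] using this
    have hins : ν.cells = insert c μ.cells := by
      apply Finset.eq_of_subset_of_card_le
      · intro x hx
        by_cases hxμ : x ∈ μ.cells
        · exact Finset.mem_insert_of_mem hxμ
        · have : x ∈ ν.cells \ μ.cells := Finset.mem_sdiff.mpr ⟨hx, hxμ⟩
          rw [hc, Finset.mem_singleton] at this
          simp [this]
      · rw [Finset.card_insert_of_notMem hcν.2, hcard']
    have hAdd : AddP μ c := by
      refine ⟨by simpa [mem_cells] using hcν.2, ?_, ?_⟩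
      · rcases Nat.eq_zero_or_pos c.1 with h0 | h0
        · exact Or.inl h0
        · right
          have : (c.1 - 1, c.2) ∈ ν := ν.up_left_mem (by omega) le_rfl ((mem_cells _).mp hcν.1)
          have hne : (c.1 - 1, c.2) ≠ c := by
            intro h; apply_fun Prod.fst at h; simp at h; omega
          have := hins ▸ (mem_cells _).mpr this
          rcases Finset.mem_insert.mp this with h | h
          · exact absurd h hne
          · exact (mem_cells _).mp h
      · rcases Nat.eq_zero_or_pos c.2 with h0 | h0
        · exact Or.inl h0
        · right
          have : (c.1, c.2 - 1) ∈ ν := ν.up_left_mem le_rfl (by omega) ((mem_cells _).mp hcν.1)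
          have hne : (c.1, c.2 - 1) ≠ c := by
            intro h; apply_fun Prod.snd at h; simp at h; omega
          have := hins ▸ (mem_cells _).mpr this
          rcases Finset.mem_insert.mp this with h | h
          · exact absurd h hne
          · exact (mem_cells _).mp h
    exact ⟨c, hAdd, ext_cells (by rw [hins, grow_cells hAdd])⟩
  · rintro ⟨c, hAdd, rfl⟩
    constructor
    · rw [← cells_subset_iff, grow_cells hAdd]; exact Finset.subset_insert _ _
    · exact grow_card hAdd


lemma shrink_card {ν : YoungDiagram} {c : ℕ × ℕ} (h : RemP ν c) :
    ν.card = (shrink ν c).card + 1 := by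
  rw [YoungDiagram.card, YoungDiagram.card, shrink_cells h,
    Finset.card_erase_of_mem (by simpa using h.1)]
  have : c ∈ ν.cells := by simpa using h.1
  have := Finset.card_pos.mpr ⟨c, this⟩
  omega

lemma covers_iff_shrink {μ ν : YoungDiagram} :
    Covers μ ν ↔ ∃ c, RemP ν c ∧ μ = shrink ν c := by
  rw [covers_iff_grow]
  constructor
  · rintro ⟨c, hAdd, rfl⟩
    have hgc := grow_cells hAdd
    have hcν : c ∈ grow μ c := by rw [← mem_cells, hgc]; exact Finset.mem_insert_self _ _
    have hRem : RemP (grow μ c) c := by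
      refine ⟨hcν, ?_, ?_⟩
      · rw [← mem_cells, hgc, Finset.mem_insert]
        rintro (h | h)
        · apply_fun Prod.fst at h; simp at h
        · exact hAdd.1 (μ.up_left_mem (by omega) le_rfl ((mem_cells _).mp h))
      · rw [← mem_cells, hgc, Finset.mem_insert]
        rintro (h | h)
        · apply_fun Prod.snd at h; simp at h
        · exact hAdd.1 (μ.up_left_mem le_rfl (by omega) ((mem_cells _).mp h))
    refine ⟨c, hRem, ext_cells ?_⟩
    rw [shrink_cells hRem, hgc, Finset.erase_insert (by simpa using hAdd.1)]
  · rintro ⟨c, hRem, rfl⟩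
    have hsc := shrink_cells hRem
    have hcn : c ∉ shrink ν c := by
      rw [← mem_cells, hsc]; simp
    have hAdd : AddP (shrink ν c) c := by
      refine ⟨hcn, ?_, ?_⟩
      · rcases Nat.eq_zero_or_pos c.1 with h0 | h0
        · exact Or.inl h0
        · right
          rw [← mem_cells, hsc, Finset.mem_erase]
          constructor
          · intro h; apply_fun Prod.fst at h; simp at h; omega
          · exact (mem_cells _).mpr (ν.up_left_mem (by omega) le_rfl hRem.1)
      · rcases Nat.eq_zero_or_pos c.2 with h0 | h0
        · exact Or.inl h0
        · right
          rw [← mem_cells, hsc, Finset.mem_erase]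
          constructor
          · intro h; apply_fun Prod.snd at h; simp at h; omega
          · exact (mem_cells _).mpr (ν.up_left_mem le_rfl (by omega) hRem.1)
    refine ⟨c, hAdd, ext_cells ?_⟩
    rw [grow_cells hAdd, hsc, Finset.insert_erase (by simpa using hRem.1)]

lemma remP_grow {μ : YoungDiagram} {c : ℕ × ℕ} (h : AddP μ c) : RemP (grow μ c) c := by
  have hgc := grow_cells h
  refine ⟨by rw [← mem_cells, hgc]; exact Finset.mem_insert_self _ _, ?_, ?_⟩
  · rw [← mem_cells, hgc, Finset.mem_insert]
    rintro (h' | h')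
    · apply_fun Prod.fst at h'; simp at h'
    · exact h.1 (μ.up_left_mem (by omega) le_rfl ((mem_cells _).mp h'))
  · rw [← mem_cells, hgc, Finset.mem_insert]
    rintro (h' | h')
    · apply_fun Prod.snd at h'; simp at h'
    · exact h.1 (μ.up_left_mem le_rfl (by omega) ((mem_cells _).mp h'))

lemma shrink_grow {μ : YoungDiagram} {c : ℕ × ℕ} (h : AddP μ c) :
    shrink (grow μ c) c = μ := by
  apply ext_cells
  rw [shrink_cells (remP_grow h), grow_cells h, Finset.erase_insert (by simpa using h.1)]

lemma addP_shrink {ν : YoungDiagram} {c : ℕ × ℕ} (h : RemP ν c) : AddP (shrink ν c) c := by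
  have hsc := shrink_cells h
  refine ⟨by rw [← mem_cells, hsc]; simp, ?_, ?_⟩
  · rcases Nat.eq_zero_or_pos c.1 with h0 | h0
    · exact Or.inl h0
    · right
      rw [← mem_cells, hsc, Finset.mem_erase]
      exact ⟨by intro h'; apply_fun Prod.fst at h'; simp at h'; omega,
        (mem_cells _).mpr (ν.up_left_mem (by omega) le_rfl h.1)⟩
  · rcases Nat.eq_zero_or_pos c.2 with h0 | h0
    · exact Or.inl h0
    · right
      rw [← mem_cells, hsc, Finset.mem_erase]
      exact ⟨by intro h'; apply_fun Prod.snd at h'; simp at h'; omega,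
        (mem_cells _).mpr (ν.up_left_mem le_rfl (by omega) h.1)⟩

lemma grow_shrink {ν : YoungDiagram} {c : ℕ × ℕ} (h : RemP ν c) :
    grow (shrink ν c) c = ν := by
  apply ext_cells
  rw [grow_cells (addP_shrink h), shrink_cells h, Finset.insert_erase (by simpa using h.1)]

/-- The exchange lemma: removing `a` then adding `b ≠ a` is the same as
adding `b` then removing `a`. -/
lemma exchange {l : YoungDiagram} {a b : ℕ × ℕ} (hne : a ≠ b)
    (ha : RemP l a) (hb : AddP (shrink l a) b) :
    AddP l b ∧ RemP (grow l b) a ∧ grow (shrink l a) b = shrink (grow l b) a := by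
  have hsc := shrink_cells ha
  have hbl : b ∉ l := by
    intro hbl
    exact hb.1 (by rw [← mem_cells, hsc, Finset.mem_erase]; exact ⟨Ne.symm hne, (mem_cells _).mpr hbl⟩)
  have hAddb : AddP l b := by
    refine ⟨hbl, ?_, ?_⟩
    · rcases hb.2.1 with h0 | h0
      · exact Or.inl h0
      · right
        have := (mem_cells _).mpr h0
        rw [hsc, Finset.mem_erase] at this
        exact (mem_cells _).mp this.2
    · rcases hb.2.2 with h0 | h0
      · exact Or.inl h0
      · right
        have := (mem_cells _).mpr h0
        rw [hsc, Finset.mem_erase] at this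
        exact (mem_cells _).mp this.2
  have hgc := grow_cells hAddb
  have hRema : RemP (grow l b) a := by
    refine ⟨by rw [← mem_cells, hgc]; exact Finset.mem_insert_of_mem (by simpa using ha.1), ?_, ?_⟩
    · rw [← mem_cells, hgc, Finset.mem_insert]
      rintro (h' | h')
      · -- (a.1+1, a.2) = b : then b covers... b's lower nbr (a.1, a.2) = a must be… b has (b.1-1,b.2) ∈ shrink l a
        rcases hb.2.1 with h0 | h0
        · apply_fun Prod.fst at h'; omega
        · rw [← h'] at h0
          simp only at h0
          have := (mem_cells _).mpr h0
          rw [hsc, Finset.mem_erase] at this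
          exact absurd (by simpa using rfl : ((a.1+1) - 1, a.2) = a) this.1
      · exact ha.2.1 ((mem_cells _).mp h')
    · rw [← mem_cells, hgc, Finset.mem_insert]
      rintro (h' | h')
      · rcases hb.2.2 with h0 | h0
        · apply_fun Prod.snd at h'; omega
        · rw [← h'] at h0
          simp only at h0
          have := (mem_cells _).mpr h0
          rw [hsc, Finset.mem_erase] at this
          exact absurd (by simpa using rfl : (a.1, (a.2+1) - 1) = a) this.1
      · exact ha.2.2 ((mem_cells _).mp h')
  refine ⟨hAddb, hRema, ext_cells ?_⟩
  rw [grow_cells hb, shrink_cells hRema, hsc, hgc, Finset.erase_insert_of_ne (Ne.symm hne)]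


noncomputable instance : DecidableEq YoungDiagram := Classical.decEq _

lemma colLen_le_card (μ : YoungDiagram) : μ.colLen 0 ≤ μ.card := by
  rw [colLen_eq_card]
  exact Finset.card_le_card (Finset.filter_subset _ _)

lemma rowLen_le_card (μ : YoungDiagram) : μ.rowLen 0 ≤ μ.card := by
  rw [rowLen_eq_card]
  exact Finset.card_le_card (Finset.filter_subset _ _)

lemma addP_bound {μ : YoungDiagram} {c : ℕ × ℕ} (h : AddP μ c) :
    c.1 ≤ μ.card ∧ c.2 ≤ μ.card := by
  constructor
  · rcases h.2.1 with h0 | h0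
    · omega
    · have : (c.1 - 1, 0) ∈ μ := μ.up_left_mem le_rfl (Nat.zero_le _) h0
      have h1 := mem_iff_lt_colLen.mp this
      have h2 := colLen_le_card μ
      have : c.1 - 1 < μ.card := lt_of_lt_of_le h1 h2
      rcases Nat.eq_zero_or_pos c.1 with h3 | h3 <;> omega
  · rcases h.2.2 with h0 | h0
    · omega
    · have : (0, c.2 - 1) ∈ μ := μ.up_left_mem (Nat.zero_le _) le_rfl h0
      have h1 := mem_iff_lt_rowLen.mp this
      have h2 := rowLen_le_card μ
      have : c.2 - 1 < μ.card := lt_of_lt_of_le h1 h2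
      rcases Nat.eq_zero_or_pos c.2 with h3 | h3 <;> omega

/-- The finset of addable cells. -/
noncomputable def addCells (μ : YoungDiagram) : Finset (ℕ × ℕ) :=
  (Finset.range (μ.card + 1) ×ˢ Finset.range (μ.card + 1)).filter (AddP μ)

lemma mem_addCells {μ : YoungDiagram} {c : ℕ × ℕ} : c ∈ addCells μ ↔ AddP μ c := by
  rw [addCells, Finset.mem_filter, Finset.mem_product, Finset.mem_range, Finset.mem_range]
  refine ⟨fun h => h.2, fun h => ⟨?_, h⟩⟩
  have := addP_bound h
  omega

/-- The finset of removable cells. -/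
noncomputable def remCells (ν : YoungDiagram) : Finset (ℕ × ℕ) :=
  ν.cells.filter (RemP ν)

lemma mem_remCells {ν : YoungDiagram} {c : ℕ × ℕ} : c ∈ remCells ν ↔ RemP ν c := by
  rw [remCells, Finset.mem_filter]
  exact ⟨fun h => h.2, fun h => ⟨(mem_cells _).mpr h.1, h⟩⟩

lemma grow_injOn (μ : YoungDiagram) :
    Set.InjOn (grow μ) (addCells μ) := by
  intro a ha b hb hab
  rw [Finset.mem_coe, mem_addCells] at ha hb
  have : (grow μ a).cells = (grow μ b).cells := by rw [hab]
  rw [grow_cells ha, grow_cells hb] at this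
  have haa : a ∈ insert b μ.cells := this ▸ Finset.mem_insert_self a μ.cells
  rcases Finset.mem_insert.mp haa with h | h
  · exact h
  · exact absurd ((mem_cells _).mp h) ha.1

lemma shrink_injOn (ν : YoungDiagram) :
    Set.InjOn (shrink ν) (remCells ν) := by
  intro a ha b hb hab
  rw [Finset.mem_coe, mem_remCells] at ha hb
  have : (shrink ν a).cells = (shrink ν b).cells := by rw [hab]
  rw [shrink_cells ha, shrink_cells hb] at this
  by_contra hne
  have haa : a ∈ ν.cells.erase a := by
    rw [this, Finset.mem_erase]
    exact ⟨hne, by simpa using ha.1⟩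
  exact Finset.notMem_erase a _ haa

lemma covers_set_eq_grow (μ : YoungDiagram) :
    {ν | Covers μ ν} = ↑((addCells μ).image (grow μ)) := by
  ext ν
  simp only [Set.mem_setOf_eq, Finset.coe_image, Set.mem_image, Finset.mem_coe, mem_addCells,
    covers_iff_grow]
  constructor
  · rintro ⟨c, h1, h2⟩; exact ⟨c, h1, h2.symm⟩
  · rintro ⟨c, h1, h2⟩; exact ⟨c, h1, h2.symm⟩

lemma covers_set_eq_shrink (ν : YoungDiagram) :
    {μ | Covers μ ν} = ↑((remCells ν).image (shrink ν)) := by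
  ext μ
  simp only [Set.mem_setOf_eq, Finset.coe_image, Set.mem_image, Finset.mem_coe, mem_remCells,
    covers_iff_shrink]
  constructor
  · rintro ⟨c, h1, h2⟩; exact ⟨c, h1, h2.symm⟩
  · rintro ⟨c, h1, h2⟩; exact ⟨c, h1, h2.symm⟩

variable {M : Type*} [AddCommMonoid M]

lemma finsum_covers_grow (μ : YoungDiagram) (g : YoungDiagram → M) :
    (∑ᶠ (ν : YoungDiagram) (_ : Covers μ ν), g ν) = ∑ c ∈ addCells μ, g (grow μ c) := by
  have h1 : (∑ᶠ (ν : YoungDiagram) (_ : Covers μ ν), g ν) = ∑ᶠ ν ∈ {ν | Covers μ ν}, g ν := rfl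
  rw [h1, covers_set_eq_grow, finsum_mem_coe_finset,
    Finset.sum_image (fun a ha b hb => grow_injOn μ (by simpa using ha) (by simpa using hb))]

lemma finsum_covers_shrink (ν : YoungDiagram) (g : YoungDiagram → M) :
    (∑ᶠ (μ : YoungDiagram) (_ : Covers μ ν), g μ) = ∑ c ∈ remCells ν, g (shrink ν c) := by
  have h1 : (∑ᶠ (μ : YoungDiagram) (_ : Covers μ ν), g μ) = ∑ᶠ μ ∈ {μ | Covers μ ν}, g μ := rfl
  rw [h1, covers_set_eq_shrink, finsum_mem_coe_finset,
    Finset.sum_image (fun a ha b hb => shrink_injOn ν (by simpa using ha) (by simpa using hb))]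


lemma poch_grow (w : ℂ) {μ : YoungDiagram} {c : ℕ × ℕ} (h : AddP μ c) :
    poch w μ (grow μ c) = w + (c.2 : ℂ) - (c.1 : ℂ) := by
  rw [poch, grow_cells h, Finset.insert_sdiff_cancel (by simpa using h.1), Finset.prod_singleton]

end YoungDiagram

/-- The space of finitely supported complex functions on the set of all Young diagrams,
with basis `{δ_λ}` (`δ_λ = Finsupp.single λ 1`). -/
abbrev YDSpace : Type := YoungDiagram →₀ ℂ

open YoungDiagram in
/-- The operator `E`: `E δ_λ = ∑_{ν ↘ λ} (z)_{ν/λ}(z')_{ν/λ} δ_ν`, extended linearly. -/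
noncomputable def Eop (z z' : ℂ) : YDSpace →ₗ[ℂ] YDSpace :=
  Finsupp.lsum ℂ fun l => LinearMap.toSpanSingleton ℂ YDSpace
    (∑ᶠ (ν : YoungDiagram) (_ : Covers l ν),
      (poch z l ν * poch z' l ν) • Finsupp.single ν (1 : ℂ))

open YoungDiagram in
/-- The operator `F`: `F δ_λ = -∑_{μ ↗ λ} δ_μ`, extended linearly. -/
noncomputable def Fop : YDSpace →ₗ[ℂ] YDSpace :=
  Finsupp.lsum ℂ fun l => LinearMap.toSpanSingleton ℂ YDSpace
    (-∑ᶠ (μ : YoungDiagram) (_ : Covers μ l), Finsupp.single μ (1 : ℂ))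

/-- The operator `H`: `H δ_λ = (zz' + 2|λ|) δ_λ`, extended linearly. -/
noncomputable def Hop (z z' : ℂ) : YDSpace →ₗ[ℂ] YDSpace :=
  Finsupp.lsum ℂ fun l => LinearMap.toSpanSingleton ℂ YDSpace
    ((z * z' + 2 * (l.card : ℂ)) • Finsupp.single l (1 : ℂ))

open YoungDiagram

/-- content factor -/
noncomputable def cf (z z' : ℂ) (c : ℕ × ℕ) : ℂ :=
  (z + (c.2 : ℂ) - (c.1 : ℂ)) * (z' + (c.2 : ℂ) - (c.1 : ℂ))

lemma Eop_single (z z' : ℂ) (l : YoungDiagram) :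
    Eop z z' (Finsupp.single l 1) =
      ∑ c ∈ addCells l, cf z z' c • Finsupp.single (grow l c) (1 : ℂ) := by
  rw [Eop, Finsupp.lsum_single, LinearMap.toSpanSingleton_apply_one,
    finsum_covers_grow l (fun ν => (poch z l ν * poch z' l ν) • Finsupp.single ν (1 : ℂ))]
  refine Finset.sum_congr rfl fun c hc => ?_
  rw [mem_addCells] at hc
  rw [poch_grow z hc, poch_grow z' hc, cf]

lemma Fop_single (l : YoungDiagram) :
    Fop (Finsupp.single l 1) =
      -∑ c ∈ remCells l, Finsupp.single (shrink l c) (1 : ℂ) := by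
  rw [Fop, Finsupp.lsum_single, LinearMap.toSpanSingleton_apply_one,
    finsum_covers_shrink l (fun μ => Finsupp.single μ (1 : ℂ))]

lemma Hop_single (z z' : ℂ) (l : YoungDiagram) :
    Hop z z' (Finsupp.single l 1) = (z * z' + 2 * (l.card : ℂ)) • Finsupp.single l (1 : ℂ) := by
  rw [Hop, Finsupp.lsum_single, LinearMap.toSpanSingleton_apply_one]

lemma lhom_ext' {f g : YDSpace →ₗ[ℂ] YDSpace}
    (h : ∀ l, f (Finsupp.single l 1) = g (Finsupp.single l 1)) : f = g := by
  refine Finsupp.lhom_ext fun l b => ?_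
  have : (Finsupp.single l b : YDSpace) = b • Finsupp.single l 1 := by
    rw [Finsupp.smul_single, smul_eq_mul, mul_one]
  rw [this, map_smul, map_smul, h]

theorem HE_rel (z z' : ℂ) :
    Hop z z' ∘ₗ Eop z z' - Eop z z' ∘ₗ Hop z z' = (2 : ℂ) • Eop z z' := by
  apply lhom_ext'
  intro l
  simp only [LinearMap.sub_apply, LinearMap.comp_apply, LinearMap.smul_apply]
  rw [Eop_single, Hop_single, map_smul, map_sum, Eop_single]
  rw [Finset.sum_congr rfl (fun c hc => by
        rw [map_smul, Hop_single, grow_card (mem_addCells.mp hc), smul_comm]),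
    ← Finset.smul_sum, ← sub_smul]
  congr 1
  push_cast
  ring

theorem HF_rel (z z' : ℂ) :
    Hop z z' ∘ₗ Fop - Fop ∘ₗ Hop z z' = -((2 : ℂ) • Fop) := by
  apply lhom_ext'
  intro l
  simp only [LinearMap.sub_apply, LinearMap.comp_apply, LinearMap.smul_apply,
    LinearMap.neg_apply]
  rw [Fop_single, Hop_single, map_smul, map_neg, map_sum, Fop_single]
  rw [smul_neg, smul_neg, neg_neg, sub_neg_eq_add, Finset.smul_sum, Finset.smul_sum,
    ← Finset.sum_neg_distrib, ← Finset.sum_add_distrib]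
  refine Finset.sum_congr rfl fun c hc => ?_
  rw [Hop_single, neg_add_eq_sub, ← sub_smul]
  have hcard := shrink_card (mem_remCells.mp hc)
  congr 1
  have : ((l.shrink c).card : ℂ) = (l.card : ℂ) - 1 := by
    rw [hcard]; push_cast; ring
  rw [this]; ring


namespace YoungDiagram

/-- Converse exchange lemma. -/
lemma exchange' {l : YoungDiagram} {a b : ℕ × ℕ} (hne : a ≠ b)
    (hb : AddP l b) (ha : RemP (grow l b) a) :
    RemP l a ∧ AddP (shrink l a) b := by
  have hgc := grow_cells hb
  have hal : a ∈ l := by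
    have := (mem_cells _).mpr ha.1
    rw [hgc, Finset.mem_insert] at this
    rcases this with h | h
    · exact absurd h hne
    · exact (mem_cells _).mp h
  have hRa : RemP l a := by
    refine ⟨hal, fun h => ha.2.1 ?_, fun h => ha.2.2 ?_⟩
    · rw [← mem_cells, hgc]; exact Finset.mem_insert_of_mem ((mem_cells _).mpr h)
    · rw [← mem_cells, hgc]; exact Finset.mem_insert_of_mem ((mem_cells _).mpr h)
  have hsc := shrink_cells hRa
  refine ⟨hRa, ⟨?_, ?_, ?_⟩⟩
  · intro h
    rw [← mem_cells, hsc, Finset.mem_erase] at h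
    exact hb.1 ((mem_cells _).mp h.2)
  · rcases hb.2.1 with h0 | h0
    · exact Or.inl h0
    · right
      have hb1 : b.1 ≠ 0 := by
        intro hb1
        apply hb.1
        have hbe : b = (b.1 - 1, b.2) := by rw [Prod.ext_iff]; exact ⟨by omega, rfl⟩
        rw [hbe]; exact h0
      rw [← mem_cells, hsc, Finset.mem_erase]
      refine ⟨fun h => ha.2.1 ?_, (mem_cells _).mpr h0⟩
      have hab : (a.1 + 1, a.2) = b := by
        rw [Prod.ext_iff] at h ⊢
        simp only at h ⊢
        omega
      rw [hab, ← mem_cells, hgc]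
      exact Finset.mem_insert_self _ _
  · rcases hb.2.2 with h0 | h0
    · exact Or.inl h0
    · right
      have hb2 : b.2 ≠ 0 := by
        intro hb2
        apply hb.1
        have hbe : b = (b.1, b.2 - 1) := by rw [Prod.ext_iff]; exact ⟨rfl, by omega⟩
        rw [hbe]; exact h0
      rw [← mem_cells, hsc, Finset.mem_erase]
      refine ⟨fun h => ha.2.2 ?_, (mem_cells _).mpr h0⟩
      have hab : (a.1, a.2 + 1) = b := by
        rw [Prod.ext_iff] at h ⊢
        simp only at h ⊢
        omega
      rw [hab, ← mem_cells, hgc]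
      exact Finset.mem_insert_self _ _

end YoungDiagram

open Finset

variable {l : YoungDiagram}

lemma rowLen_zero_of_colLen_le {i : ℕ} (h : l.colLen 0 ≤ i) : l.rowLen i = 0 := by
  by_contra h0
  have : (i, 0) ∈ l := mem_iff_lt_rowLen.mpr (by omega)
  have := mem_iff_lt_colLen.mp this
  omega

lemma colLen_le_of_rowLen_pos {i : ℕ} (h : 0 < l.rowLen i) : i < l.colLen 0 := by
  by_contra h0
  have := rowLen_zero_of_colLen_le (l := l) (i := i) (by omega)
  omega

lemma card_eq_sum_rowLen {n : ℕ} (h : l.colLen 0 ≤ n) :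
    l.card = ∑ i ∈ range n, l.rowLen i := by
  rw [YoungDiagram.card, Finset.card_eq_sum_card_fiberwise
    (f := Prod.fst) (t := range n) ?_]
  · refine Finset.sum_congr rfl fun i _ => ?_
    rw [rowLen_eq_card]
    congr 1
  · intro x hx
    rw [Finset.mem_coe, mem_range]
    have : (x.1, 0) ∈ l := l.up_left_mem le_rfl (Nat.zero_le _) ((mem_cells _).mp hx)
    have := mem_iff_lt_colLen.mp this
    omega


lemma addP_iff {i j : ℕ} :
    AddP l (i, j) ↔ j = l.rowLen i ∧ (i = 0 ∨ l.rowLen i < l.rowLen (i - 1)) := by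
  have anti : l.rowLen i ≤ l.rowLen (i - 1) := l.rowLen_anti _ _ (by omega)
  simp only [AddP, mem_iff_lt_rowLen]
  constructor
  · rintro ⟨h1, h2, h3⟩
    have hj : j = l.rowLen i := by omega
    subst hj
    refine ⟨rfl, ?_⟩
    rcases h2 with h2 | h2
    · exact Or.inl h2
    · exact Or.inr h2
  · rintro ⟨rfl, h2⟩
    refine ⟨by omega, ?_, by
      rcases Nat.eq_zero_or_pos (l.rowLen i) with h | h
      · exact Or.inl h
      · exact Or.inr (by omega)⟩
    rcases h2 with h2 | h2
    · exact Or.inl h2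
    · exact Or.inr h2

lemma remP_iff {i j : ℕ} :
    RemP l (i, j) ↔ j + 1 = l.rowLen i ∧ l.rowLen (i + 1) ≤ j := by
  simp only [RemP, mem_iff_lt_rowLen]
  omega


/-- The row-indexed scalar identity (telescoping). -/
lemma row_identity (z z' : ℂ) (l : YoungDiagram) :
    (∑ i ∈ (range (l.colLen 0 + 1)).filter
        (fun i => i = 0 ∨ l.rowLen i < l.rowLen (i - 1)),
        cf z z' (i, l.rowLen i))
      - ∑ i ∈ (range (l.colLen 0 + 1)).filter
        (fun i => l.rowLen (i + 1) < l.rowLen i),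
        cf z z' (i, l.rowLen i - 1)
      = z * z' + 2 * (l.card : ℂ) := by
  set N := l.colLen 0 with hN
  set F : ℂ → ℂ := fun x => (z + x) * (z' + x) with hF
  set R : ℕ → ℂ := fun i => (l.rowLen i : ℂ) with hR
  have hcfA : ∀ i, cf z z' (i, l.rowLen i) = F (R i - i) := by
    intro i; simp only [cf, hF, hR]; ring
  have hcfB : ∀ i, l.rowLen (i + 1) < l.rowLen i →
      cf z z' (i, l.rowLen i - 1) = F (R i - 1 - i) := by
    intro i hi
    have h1 : 1 ≤ l.rowLen i := by omega
    simp only [cf, hF, hR]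
    push_cast [h1]
    ring
  -- rewrite the two filtered sums using hcfA, hcfB
  rw [Finset.sum_congr rfl (fun i _ => hcfA i),
      Finset.sum_congr rfl (fun i hi => hcfB i (by
        rw [Finset.mem_filter] at hi; exact hi.2))]
  -- convert to if-then-else over full range
  rw [Finset.sum_filter, Finset.sum_filter]
  -- telescoping
  have key : ∀ n : ℕ,
      (∑ i ∈ range (n + 1), if i = 0 ∨ l.rowLen i < l.rowLen (i - 1) then F (R i - i) else 0)
        - ∑ i ∈ range n, (if l.rowLen (i + 1) < l.rowLen i then F (R i - 1 - i) else 0)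
      = (∑ i ∈ range (n + 1), F (R i - i)) - ∑ i ∈ range n, F (R i - 1 - i) := by
    intro n
    induction n with
    | zero => simp
    | succ n ih =>
      rw [Finset.sum_range_succ
            (f := fun i => if i = 0 ∨ l.rowLen i < l.rowLen (i - 1) then F (R i - ↑i) else 0)
            (n := n + 1),
          Finset.sum_range_succ
            (f := fun i => if l.rowLen (i + 1) < l.rowLen i then F (R i - 1 - ↑i) else 0)
            (n := n),
          Finset.sum_range_succ (f := fun i => F (R i - ↑i)) (n := n + 1),
          Finset.sum_range_succ (f := fun i => F (R i - 1 - ↑i)) (n := n)]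
      have anti : l.rowLen (n + 1) ≤ l.rowLen n := l.rowLen_anti _ _ (by omega)
      by_cases hc : l.rowLen (n + 1) < l.rowLen n
      · rw [if_pos hc,
          if_pos (show n + 1 = 0 ∨ l.rowLen (n + 1) < l.rowLen (n + 1 - 1) from Or.inr hc)]
        linear_combination ih
      · have heq : l.rowLen (n + 1) = l.rowLen n := by omega
        have hiff : ¬ (n + 1 = 0 ∨ l.rowLen (n + 1) < l.rowLen (n + 1 - 1)) := by
          simp only [Nat.add_sub_cancel]
          omega
        rw [if_neg hc, if_neg hiff, add_zero, add_zero]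
        have harg : R (n + 1) - (↑(n + 1) : ℂ) = R n - 1 - n := by
          simp only [hR, heq]
          push_cast
          ring
        rw [harg]
        linear_combination ih
  -- B N = 0 : no removable in row N
  have hBN : (if l.rowLen (N + 1) < l.rowLen N then F (R N - 1 - N) else 0) = 0 := by
    rw [if_neg]
    have := rowLen_zero_of_colLen_le (l := l) (i := N) le_rfl
    omega
  rw [Finset.sum_range_succ
        (f := fun i => if l.rowLen (i + 1) < l.rowLen i then F (R i - 1 - ↑i) else 0)
        (n := N), hBN, add_zero, key N]
  -- final computation
  have hRN : R N = 0 := by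
    simp only [hR, rowLen_zero_of_colLen_le (l := l) (i := N) le_rfl, Nat.cast_zero]
  have hsplit : (∑ i ∈ range N, F (R i - 1 - i))
      = (∑ i ∈ range (N + 1), F (R i - 1 - i)) - F (R N - 1 - N) := by
    rw [Finset.sum_range_succ]; ring
  rw [hsplit,
    show (∑ i ∈ range (N + 1), F (R i - ↑i))
        - ((∑ i ∈ range (N + 1), F (R i - 1 - ↑i)) - F (R N - 1 - ↑N))
      = ((∑ i ∈ range (N + 1), F (R i - ↑i)) - (∑ i ∈ range (N + 1), F (R i - 1 - ↑i)))
        + F (R N - 1 - ↑N) from by ring,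
    ← Finset.sum_sub_distrib]
  have hdiff : ∀ i : ℕ, F (R i - i) - (F (R i - 1 - i)) = z + z' - 1 + 2 * (R i - i) := by
    intro i; simp only [hF]; ring
  rw [Finset.sum_congr rfl (fun i _ => hdiff i)]
  have hsum1 : (∑ i ∈ range (N + 1), (z + z' - 1 + 2 * (R i - i)))
      = (N + 1) * (z + z' - 1) + 2 * (∑ i ∈ range (N + 1), R i)
        - 2 * ∑ i ∈ range (N + 1), (i : ℂ) := by
    rw [Finset.sum_add_distrib, Finset.sum_const, Finset.card_range]
    have h2 : ∑ i ∈ range (N + 1), 2 * (R i - ↑i)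
        = 2 * ∑ i ∈ range (N + 1), (R i - ↑i) := (Finset.mul_sum _ _ _).symm
    rw [h2, Finset.sum_sub_distrib]
    push_cast
    ring
  rw [hsum1]
  have hcard : (∑ i ∈ range (N + 1), R i) = (l.card : ℂ) := by
    simp only [hR]
    rw [← Nat.cast_sum]
    exact_mod_cast congrArg (Nat.cast (R := ℂ)) (card_eq_sum_rowLen (by omega)).symm
  have h1 : (∑ i ∈ range (N + 1), i) * 2 = (N + 1) * N := by
    have := Finset.sum_range_id_mul_two (N + 1)
    simpa using this
  have hgauss : (∑ i ∈ range (N + 1), (i : ℂ)) * 2 = ((N : ℂ) + 1) * N := by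
    have := congrArg (Nat.cast (R := ℂ)) h1
    push_cast at this
    exact this
  rw [hcard, hRN]
  simp only [hF]
  linear_combination -hgauss


lemma addCells_eq :
    addCells l = ((range (l.colLen 0 + 1)).filter
      (fun i => i = 0 ∨ l.rowLen i < l.rowLen (i - 1))).image (fun i => (i, l.rowLen i)) := by
  ext c
  rcases c with ⟨i, j⟩
  rw [mem_addCells, Finset.mem_image]
  constructor
  · intro h
    rw [addP_iff] at h
    obtain ⟨rfl, h2⟩ := h
    refine ⟨i, Finset.mem_filter.mpr ⟨Finset.mem_range.mpr ?_, h2⟩, rfl⟩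
    rcases h2 with h2 | h2
    · omega
    · have h3 : 0 < l.rowLen (i - 1) := by omega
      have := colLen_le_of_rowLen_pos h3
      omega
  · rintro ⟨i', hi', he⟩
    rw [Finset.mem_filter] at hi'
    obtain ⟨rfl, rfl⟩ : i' = i ∧ l.rowLen i' = j := by simpa [Prod.ext_iff] using he
    exact addP_iff.mpr ⟨rfl, hi'.2⟩

lemma remCells_eq :
    remCells l = ((range (l.colLen 0 + 1)).filter
      (fun i => l.rowLen (i + 1) < l.rowLen i)).image (fun i => (i, l.rowLen i - 1)) := by
  ext c
  rcases c with ⟨i, j⟩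
  rw [mem_remCells, Finset.mem_image]
  constructor
  · intro h
    rw [remP_iff] at h
    obtain ⟨h1, h2⟩ := h
    refine ⟨i, Finset.mem_filter.mpr ⟨Finset.mem_range.mpr ?_, by omega⟩, by
      rw [Prod.ext_iff]; exact ⟨rfl, by omega⟩⟩
    have h3 : 0 < l.rowLen i := by omega
    have := colLen_le_of_rowLen_pos h3
    omega
  · rintro ⟨i', hi', he⟩
    rw [Finset.mem_filter] at hi'
    obtain ⟨rfl, rfl⟩ : i' = i ∧ l.rowLen i' - 1 = j := by simpa [Prod.ext_iff] using he
    exact remP_iff.mpr ⟨by omega, by omega⟩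

/-- The key corner-content identity:
`∑_{addable} (z+c)(z'+c) - ∑_{removable} (z+c)(z'+c) = zz' + 2|λ|`. -/
lemma corner_identity (z z' : ℂ) (l : YoungDiagram) :
    (∑ c ∈ addCells l, cf z z' c) - ∑ c ∈ remCells l, cf z z' c
      = z * z' + 2 * (l.card : ℂ) := by
  rw [addCells_eq, remCells_eq,
    Finset.sum_image (fun a _ b _ h => by exact (Prod.ext_iff.mp h).1),
    Finset.sum_image (fun a _ b _ h => by exact (Prod.ext_iff.mp h).1)]
  exact row_identity z z' l

theorem EF_rel (z z' : ℂ) :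
    Eop z z' ∘ₗ Fop - Fop ∘ₗ Eop z z' = Hop z z' := by
  apply lhom_ext'
  intro l
  simp only [LinearMap.sub_apply, LinearMap.comp_apply]
  rw [Fop_single, map_neg, map_sum, Eop_single, map_sum, Hop_single]
  simp only [Eop_single, map_smul, Fop_single, smul_neg, Finset.smul_sum]
  rw [Finset.sum_sigma' (remCells l) (fun a => addCells (shrink l a))
      (fun a b => cf z z' b • Finsupp.single (grow (shrink l a) b) (1 : ℂ))]
  rw [Finset.sum_neg_distrib, sub_neg_eq_add]
  rw [Finset.sum_sigma' (addCells l) (fun b => remCells (grow l b))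
      (fun b a => cf z z' b • Finsupp.single (shrink (grow l b) a) (1 : ℂ))]
  rw [← Finset.sum_filter_add_sum_filter_not
      ((remCells l).sigma fun a => addCells (shrink l a)) (fun p => p.2 = p.1)]
  rw [← Finset.sum_filter_add_sum_filter_not
      ((addCells l).sigma fun b => remCells (grow l b)) (fun p => p.2 = p.1)]
  have hoff :
      (∑ p ∈ (((remCells l).sigma fun a => addCells (shrink l a)).filter
          fun p => ¬ p.2 = p.1), cf z z' p.2 • Finsupp.single (grow (shrink l p.1) p.2) (1 : ℂ))
        = ∑ p ∈ (((addCells l).sigma fun b => remCells (grow l b)).filter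
          fun p => ¬ p.2 = p.1), cf z z' p.1 • Finsupp.single (shrink (grow l p.1) p.2) (1 : ℂ) := by
    refine Finset.sum_nbij' (fun p => ⟨p.2, p.1⟩) (fun p => ⟨p.2, p.1⟩) ?_ ?_ ?_ ?_ ?_
    · rintro ⟨a, b⟩ hp
      rw [Finset.mem_filter, Finset.mem_sigma] at hp ⊢
      obtain ⟨⟨ha, hb⟩, hne⟩ := hp
      rw [mem_remCells] at ha
      rw [mem_addCells] at hb
      simp only at hne ⊢
      obtain ⟨h1, h2, _⟩ := exchange (fun h => hne h.symm) ha hb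
      exact ⟨⟨mem_addCells.mpr h1, mem_remCells.mpr h2⟩, fun h => hne h.symm⟩
    · rintro ⟨b, a⟩ hp
      rw [Finset.mem_filter, Finset.mem_sigma] at hp ⊢
      obtain ⟨⟨hb, ha⟩, hne⟩ := hp
      rw [mem_addCells] at hb
      rw [mem_remCells] at ha
      simp only at hne ⊢
      obtain ⟨h1, h2⟩ := exchange' hne hb ha
      exact ⟨⟨mem_remCells.mpr h1, mem_addCells.mpr h2⟩, fun h => hne h.symm⟩
    · rintro ⟨a, b⟩ _; rfl
    · rintro ⟨b, a⟩ _; rfl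
    · rintro ⟨a, b⟩ hp
      rw [Finset.mem_filter, Finset.mem_sigma] at hp
      obtain ⟨⟨ha, hb⟩, hne⟩ := hp
      rw [mem_remCells] at ha
      rw [mem_addCells] at hb
      simp only at hne ⊢
      obtain ⟨_, _, heq⟩ := exchange (fun h => hne h.symm) ha hb
      rw [heq]
  have hdiag1 :
      (∑ p ∈ (((remCells l).sigma fun a => addCells (shrink l a)).filter
          fun p => p.2 = p.1), cf z z' p.2 • Finsupp.single (grow (shrink l p.1) p.2) (1 : ℂ))
        = ∑ a ∈ remCells l, cf z z' a • Finsupp.single l (1 : ℂ) := by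
    refine Finset.sum_nbij' (fun p => p.1) (fun a => ⟨a, a⟩) ?_ ?_ ?_ ?_ ?_
    · rintro ⟨a, b⟩ hp
      rw [Finset.mem_filter, Finset.mem_sigma] at hp
      exact hp.1.1
    · intro a ha
      rw [Finset.mem_filter, Finset.mem_sigma]
      rw [mem_remCells] at ha
      exact ⟨⟨mem_remCells.mpr ha, mem_addCells.mpr (addP_shrink ha)⟩, rfl⟩
    · rintro ⟨a, b⟩ hp
      rw [Finset.mem_filter] at hp
      have : b = a := hp.2
      subst this; rfl
    · intro a _; rfl
    · rintro ⟨a, b⟩ hp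
      rw [Finset.mem_filter, Finset.mem_sigma] at hp
      obtain ⟨⟨ha, _⟩, hne⟩ := hp
      have hb : b = a := hne
      subst hb
      rw [mem_remCells] at ha
      rw [grow_shrink ha]
  have hdiag2 :
      (∑ p ∈ (((addCells l).sigma fun b => remCells (grow l b)).filter
          fun p => p.2 = p.1), cf z z' p.1 • Finsupp.single (shrink (grow l p.1) p.2) (1 : ℂ))
        = ∑ b ∈ addCells l, cf z z' b • Finsupp.single l (1 : ℂ) := by
    refine Finset.sum_nbij' (fun p => p.1) (fun b => ⟨b, b⟩) ?_ ?_ ?_ ?_ ?_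
    · rintro ⟨b, a⟩ hp
      rw [Finset.mem_filter, Finset.mem_sigma] at hp
      exact hp.1.1
    · intro b hb
      rw [Finset.mem_filter, Finset.mem_sigma]
      rw [mem_addCells] at hb
      exact ⟨⟨mem_addCells.mpr hb, mem_remCells.mpr (remP_grow hb)⟩, rfl⟩
    · rintro ⟨b, a⟩ hp
      rw [Finset.mem_filter] at hp
      have : a = b := hp.2
      subst this; rfl
    · intro b _; rfl
    · rintro ⟨b, a⟩ hp
      rw [Finset.mem_filter, Finset.mem_sigma] at hp
      obtain ⟨⟨hb, _⟩, hne⟩ := hp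
      have ha : a = b := hne
      subst ha
      rw [mem_addCells] at hb
      rw [shrink_grow hb]
  rw [hoff, hdiag1, hdiag2]
  have habel : ∀ (v w u : YDSpace), -(v + w) + (u + w) = u - v := by intros; abel
  rw [habel, ← Finset.sum_smul, ← Finset.sum_smul, ← sub_smul, corner_identity]


/-- The operators `E, F, H` on the space of finitely supported
functions on Young diagrams satisfy the `sl(2,ℂ)` commutation relations. -/
theorem sl2_relations_on_young_diagrams (z z' : ℂ) :
    (Hop z z' ∘ₗ Eop z z' - Eop z z' ∘ₗ Hop z z' = (2 : ℂ) • Eop z z') ∧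
      (Hop z z' ∘ₗ Fop - Fop ∘ₗ Hop z z' = -((2 : ℂ) • Fop)) ∧
      (Eop z z' ∘ₗ Fop - Fop ∘ₗ Eop z z' = Hop z z') := by
  exact ⟨HE_rel z z', HF_rel z z', EF_rel z z'⟩
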